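/- arXiv:1803.07285 — 11 statements merged into one kernel-verified Lean document; each statement's English description precedes it below -/
import Mathlib

section
/- Let S be a numerical semigroup generated by m₁,...,mₙ and k a positive integer with gcd(k, m₁) = 1. Let S_k be the numerical semigroup generated by m₁, k·m₂, ..., k·mₙ. Then for every natural number b, b ∈ S if and only if k·b ∈ S_k. -/
/-- Let S be the numerical semigroup generated by m₀,…,mₙ (positive,
with gcd 1) and S_k its k-lifting, generated by m₀, k·m₁, …, k·mₙ, where
gcd(k, m₀) = 1 and k > 0.  Then for every b : ℕ, b ∈ S ↔ k·b ∈ S_k. -/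
theorem lifting_membership_iff (n : ℕ) (m : Fin (n + 1) → ℕ)
    (hm : ∀ i, 0 < m i) (hcop : Finset.univ.gcd m = 1)
    (k : ℕ) (hk : 0 < k) (hkm : Nat.gcd k (m 0) = 1) (b : ℕ) :
    (∃ v : Fin (n + 1) → ℕ, b = ∑ i, v i * m i) ↔
      (∃ w : Fin (n + 1) → ℕ,
        k * b = ∑ i, w i * (if i = 0 then m 0 else k * m i)) := by
  constructor
  · rintro ⟨v, rfl⟩
    refine ⟨fun i => if i = 0 then k * v 0 else v i, ?_⟩
    simp only [Fin.sum_univ_succ, Fin.succ_ne_zero, if_false, if_true, reduceIte,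
      Finset.mul_sum]
    ring_nf
    congr 1
    rw [Finset.mul_sum]
    exact Finset.sum_congr rfl fun i _ => by ring
  · rintro ⟨w, hw⟩
    rw [Fin.sum_univ_succ] at hw
    simp only [Fin.succ_ne_zero, if_false, if_true, reduceIte] at hw
    have hdvd : k ∣ w 0 * m 0 := by
      have h1 : k ∣ ∑ i : Fin n, w i.succ * (k * m i.succ) := by
        apply Finset.dvd_sum
        intro i _
        exact ⟨w i.succ * m i.succ, by ring⟩
      have h2 : k ∣ w 0 * m 0 + ∑ i : Fin n, w i.succ * (k * m i.succ) := by
        rw [← hw]; exact Dvd.intro b rfl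
      exact (Nat.dvd_add_right h1).mp (by rwa [add_comm] at h2)
    have hdw : k ∣ w 0 := (Nat.Coprime.dvd_of_dvd_mul_right hkm hdvd)
    obtain ⟨c, hc⟩ := hdw
    refine ⟨fun i => if i = 0 then c else w i, ?_⟩
    apply Nat.eq_of_mul_eq_mul_left hk
    rw [hw, Fin.sum_univ_succ]
    simp only [Fin.succ_ne_zero, if_false, if_true, reduceIte, Finset.mul_sum, hc]
    ring_nf
    congr 1
    rw [Finset.mul_sum]
    exact Finset.sum_congr rfl fun i _ => by ring
end

section
/- Let S be a numerical semigroup generated by m₁,...,mₙ and S_k its k-lifting (gcd(k,m₁)=1). The map sending the factorization (v₁, v₂, ..., vₙ) of b ∈ S to (k·v₁, v₂, ..., vₙ) is a bijection between the set of factorizations of b in S (with respect to generators m₁,...,mₙ) and the set of factorizations of k·b in S_k (with respect to generators m₁, km₂, ..., kmₙ). -/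
lemma lifting_sum_key (n : ℕ) (m : Fin (n + 1) → ℕ) (k : ℕ) (v : Fin (n + 1) → ℕ) :
    ∑ i, (Function.update v 0 (k * v 0)) i * (if i = 0 then m 0 else k * m i)
      = k * ∑ i, v i * m i := by
  rw [Fin.sum_univ_succ, Fin.sum_univ_succ, mul_add, Finset.mul_sum]
  simp only [Function.update_self, if_pos rfl, if_true,
    Function.update_of_ne (Fin.succ_ne_zero _), if_neg (Fin.succ_ne_zero _)]
  congr 1
  · ring
  · exact Finset.sum_congr rfl fun i _ => by ring

/-- (v₁,…,vₙ) ↦ (k·v₁, v₂, …, vₙ) is a bijection between the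
factorizations of b with respect to m₁,…,mₙ and the factorizations of k·b with
respect to m₁, km₂, …, kmₙ. -/
theorem lifting_factorization_bijection (n : ℕ) (m : Fin (n + 1) → ℕ)
    (hm : ∀ i, 0 < m i) (k : ℕ) (hk : 0 < k) (hkm : Nat.gcd k (m 0) = 1) (b : ℕ) :
    Set.BijOn (fun v : Fin (n + 1) → ℕ => Function.update v 0 (k * v 0))
      {v | ∑ i, v i * m i = b}
      {w | ∑ i, w i * (if i = 0 then m 0 else k * m i) = k * b} := by
  refine ⟨?_, ?_, ?_⟩
  · intro v hv
    simp only [Set.mem_setOf_eq] at hv ⊢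
    rw [lifting_sum_key, hv]
  · intro v _ v' _ h
    simp only at h
    funext i
    rcases eq_or_ne i 0 with rfl | hi
    · have := congrFun h 0
      simp only [Function.update_self] at this
      exact Nat.eq_of_mul_eq_mul_left hk this
    · have := congrFun h i
      simpa [Function.update_of_ne hi] using this
  · intro w hw
    simp only [Set.mem_setOf_eq] at hw
    have hdvd : k ∣ w 0 := by
      have h1 : k ∣ w 0 * m 0 := by
        rw [Fin.sum_univ_succ] at hw
        simp only [if_pos rfl, if_neg (Fin.succ_ne_zero _)] at hw
        have h2 : k ∣ ∑ i : Fin n, w i.succ * (k * m i.succ) :=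
          Finset.dvd_sum fun i _ => ⟨w i.succ * m i.succ, by ring⟩
        obtain ⟨c, hc⟩ := h2
        rw [hc] at hw
        have h4 : w 0 * m 0 = k * b - k * c := Nat.eq_sub_of_add_eq hw
        rw [h4]
        exact Nat.dvd_sub ⟨b, rfl⟩ ⟨c, rfl⟩
      exact (Nat.Coprime.dvd_of_dvd_mul_right hkm h1)
    refine ⟨Function.update w 0 (w 0 / k), ?_, ?_⟩
    · simp only [Set.mem_setOf_eq]
      have key := lifting_sum_key n m k (Function.update w 0 (w 0 / k))
      have hupd : Function.update (Function.update w 0 (w 0 / k)) 0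
          (k * (Function.update w 0 (w 0 / k)) 0) = w := by
        funext i
        rcases eq_or_ne i 0 with rfl | hi
        · simp [Nat.mul_div_cancel' hdvd]
        · simp [Function.update_of_ne hi]
      rw [hupd, hw] at key
      exact (Nat.eq_of_mul_eq_mul_left hk key).symm
    · simp only
      funext i
      rcases eq_or_ne i 0 with rfl | hi
      · simp [Nat.mul_div_cancel' hdvd]
      · simp [Function.update_of_ne hi]
end

section
/- Let R = K[x₁,...,xₙ] be the polynomial ring over a field K, graded by deg_S(xᵢ) = mᵢ where S is the numerical semigroup generated by m₁,...,mₙ, and let I_S be the kernel of the map R → K[t] sending xᵢ ↦ t^{mᵢ}. Let I_{S_k} be the toric ideal of the k-lifting S_k (generated by m₁, km₂,...,kmₙ, gcd(k,m₁)=1). Then the ring homomorphism f: R → R with f(x₁) = x₁^k and f(xᵢ) = xᵢ for i > 1 maps I_S into I_{S_k}; explicitly, if M - N ∈ I_S is a binomial, then f(M) - f(N) ∈ I_{S_k}. -/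
open MvPolynomial

/-- the substitution f : x₁ ↦ x₁^k, xᵢ ↦ xᵢ (i > 1) maps the toric
ideal I_S (kernel of xᵢ ↦ t^{mᵢ}) into the toric ideal I_{S_k} (kernel of
x₁ ↦ t^{m₁}, xᵢ ↦ t^{k·mᵢ}); in particular this holds for every binomial
M − N ∈ I_S. -/
theorem lifting_map_toric_ideal (K : Type*) [Field K] (n : ℕ) (m : Fin (n + 1) → ℕ)
    (hm : ∀ i, 0 < m i) (k : ℕ) (hk : 0 < k) (hkm : Nat.gcd k (m 0) = 1) :
    let φ : MvPolynomial (Fin (n + 1)) K →ₐ[K] Polynomial K :=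
      aeval (fun i => (Polynomial.X : Polynomial K) ^ m i)
    let φk : MvPolynomial (Fin (n + 1)) K →ₐ[K] Polynomial K :=
      aeval (fun i => (Polynomial.X : Polynomial K) ^ (if i = 0 then m 0 else k * m i))
    let f : MvPolynomial (Fin (n + 1)) K →ₐ[K] MvPolynomial (Fin (n + 1)) K :=
      aeval (fun i => if i = 0 then (X 0 : MvPolynomial (Fin (n + 1)) K) ^ k else X i)
    (∀ p, φ p = 0 → φk (f p) = 0) ∧
    (∀ u v : Fin (n + 1) →₀ ℕ,
      φ (monomial u 1 - monomial v 1) = 0 →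
        φk (f (monomial u 1 - monomial v 1)) = 0) := by
  intro φ φk f
  have key : ∀ p, φk (f p) = Polynomial.aeval (Polynomial.X ^ k : Polynomial K) (φ p) := by
    intro p
    have hcomp : (φk.comp f) =
        ((Polynomial.aeval (Polynomial.X ^ k : Polynomial K)).comp φ) := by
      apply MvPolynomial.algHom_ext
      intro i
      simp only [AlgHom.comp_apply, φ, φk, f, aeval_X]
      by_cases h : i = 0
      · simp [h, map_pow, ← pow_mul, mul_comm]
      · simp [h, map_pow, ← pow_mul, mul_comm]
    calc φk (f p) = (φk.comp f) p := rfl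
      _ = _ := by rw [hcomp]; rfl
  refine ⟨fun p hp => by rw [key, hp, map_zero], fun u v h => by rw [key, h, map_zero]⟩
end

section
/- Let S be the numerical semigroup generated by m₁,...,mₙ and S_k its k-lifting (gcd(k,m₁)=1). Suppose M = x₂^{u₂}⋯xₙ^{uₙ} and N' = x₁^{v₁'}x₂^{v₂}⋯xₙ^{vₙ} are monomials with v₁' > 0 such that M - N' lies in the toric ideal I_{S_k}. Then k divides v₁', and for N = x₁^{v₁'/k}x₂^{v₂}⋯xₙ^{vₙ}, the binomial M - N lies in the toric ideal I_S. -/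
open MvPolynomial

lemma aeval_monomial_Xpow (K : Type*) [Field K] (n : ℕ) (e : Fin n → ℕ) (d : Fin n →₀ ℕ) :
    aeval (fun i => (Polynomial.X : Polynomial K) ^ (e i)) (monomial d (1:K))
      = Polynomial.X ^ (∑ i, d i * e i) := by
  rw [aeval_monomial, map_one, one_mul]
  rw [Finsupp.prod_fintype _ _ (fun i => pow_zero _)]
  rw [← Finset.prod_pow_eq_pow_sum]
  exact Finset.prod_congr rfl fun i _ => by rw [← pow_mul, mul_comm]

/-- if M = x₂^{u₂}⋯xₙ^{uₙ} and N' = x₁^{v₁'}⋯xₙ^{vₙ} with v₁' > 0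
and M − N' ∈ I_{S_k}, then k ∣ v₁' and, with N = x₁^{v₁'/k}x₂^{v₂}⋯xₙ^{vₙ},
the binomial M − N lies in I_S. -/
theorem lifting_binomial_descends (K : Type*) [Field K] (n : ℕ) (m : Fin (n + 1) → ℕ)
    (hm : ∀ i, 0 < m i) (k : ℕ) (hk : 0 < k) (hkm : Nat.gcd k (m 0) = 1)
    (u v' : Fin (n + 1) →₀ ℕ) (hu : u 0 = 0) (hv' : 0 < v' 0)
    (hker : aeval (fun i => (Polynomial.X : Polynomial K) ^ (if i = 0 then m 0 else k * m i))
      ((monomial u 1 : MvPolynomial (Fin (n + 1)) K) - monomial v' 1) = 0) :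
    k ∣ v' 0 ∧
      aeval (fun i => (Polynomial.X : Polynomial K) ^ m i)
        ((monomial u 1 : MvPolynomial (Fin (n + 1)) K)
          - monomial (v'.update 0 (v' 0 / k)) 1) = 0 := by
  rw [map_sub, aeval_monomial_Xpow, aeval_monomial_Xpow, sub_eq_zero] at hker
  have hdeg := congrArg Polynomial.natDegree hker
  simp only [Polynomial.natDegree_X_pow] at hdeg
  rw [Fin.sum_univ_succ, Fin.sum_univ_succ] at hdeg
  have hne : ∀ i : Fin n, (i.succ : Fin (n+1)) ≠ 0 := fun i => Fin.succ_ne_zero i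
  simp only [if_pos rfl, if_true, hu, zero_mul, zero_add, if_neg (hne _)] at hdeg
  set Su := ∑ i : Fin n, u i.succ * m i.succ with hSu
  set Sv := ∑ i : Fin n, v' i.succ * m i.succ with hSv
  have hA : (∑ i : Fin n, u i.succ * (k * m i.succ)) = k * Su := by
    rw [hSu, Finset.mul_sum]; exact Finset.sum_congr rfl fun i _ => by ring
  have hB : (∑ i : Fin n, v' i.succ * (k * m i.succ)) = k * Sv := by
    rw [hSv, Finset.mul_sum]; exact Finset.sum_congr rfl fun i _ => by ring
  rw [hA, hB] at hdeg
  -- hdeg : k * Su = v' 0 * m 0 + k * Sv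
  have hkdvd : k ∣ v' 0 := by
    have h1 : k ∣ v' 0 * m 0 := by
      have heq : v' 0 * m 0 = k * Su - k * Sv := by omega
      rw [heq]; exact Nat.dvd_sub ⟨Su, rfl⟩ ⟨Sv, rfl⟩
    exact Nat.Coprime.dvd_of_dvd_mul_right hkm h1
  refine ⟨hkdvd, ?_⟩
  rw [map_sub, aeval_monomial_Xpow, aeval_monomial_Xpow, sub_eq_zero]
  congr 1
  rw [Fin.sum_univ_succ, Fin.sum_univ_succ, hu, zero_mul, zero_add]
  have hupd0 : v'.update 0 (v' 0 / k) 0 = v' 0 / k := by simp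
  have hupds : ∀ i : Fin n, v'.update 0 (v' 0 / k) i.succ = v' i.succ := fun i => by
    simp [Finsupp.coe_update, Function.update_of_ne (hne i)]
  rw [hupd0]
  simp only [hupds]
  obtain ⟨c, hc⟩ := hkdvd
  have hck : v' 0 / k = c := by rw [hc, Nat.mul_div_cancel_left c hk]
  rw [hck]
  refine Nat.eq_of_mul_eq_mul_left hk ?_
  rw [hdeg, hc]; ring
end

section
/- Let S be the numerical semigroup generated minimally by m₁ < m₂ < ⋯ < mₙ and let S_k be its k-lifting (gcd(k,m₁)=1, k ≥ 1). Suppose that for every tuple (u₂,...,uₙ) ∈ ℕ^{n-1} with u₂m₂+⋯+uₙmₙ ∈ m₁+S there exists a tuple (v₁,...,vₙ) ∈ ℕⁿ with v₁ > 0, v₁m₁+⋯+vₙmₙ = u₂m₂+⋯+uₙmₙ, and u₂+⋯+uₙ ≤ v₁+⋯+vₙ (Herzog's criterion for S). Then the analogous criterion holds for S_k: for every (u₂,...,uₙ) with u₂(km₂)+⋯+uₙ(kmₙ) ∈ m₁+S_k, there exists (w₁,v₂,...,vₙ) with w₁ > 0, w₁m₁+v₂(km₂)+⋯+vₙ(kmₙ)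 = u₂(km₂)+⋯+uₙ(kmₙ), and u₂+⋯+uₙ ≤ w₁+v₂+⋯+vₙ. -/
/-- if Herzog's criterion holds for S (generated minimally by
m₁ < m₂ < ⋯ < mₙ), then it holds for every k-lifting S_k with gcd(k,m₁)=1,
k ≥ 1. -/
theorem herzog_criterion_lifts (n : ℕ) (m : Fin (n + 1) → ℕ)
    (hm : ∀ i, 0 < m i) (hmono : StrictMono m)
    (k : ℕ) (hk : 1 ≤ k) (hkm : Nat.gcd k (m 0) = 1)
    (hcrit : ∀ u : Fin n → ℕ,
      (∃ s : Fin (n + 1) → ℕ,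
          ∑ i : Fin n, u i * m i.succ = m 0 + ∑ i, s i * m i) →
      ∃ v : Fin (n + 1) → ℕ, 0 < v 0 ∧
        (∑ i, v i * m i = ∑ i : Fin n, u i * m i.succ) ∧
        (∑ i : Fin n, u i ≤ ∑ i, v i)) :
    ∀ u : Fin n → ℕ,
      (∃ s : Fin (n + 1) → ℕ,
          ∑ i : Fin n, u i * (k * m i.succ)
            = m 0 + ∑ i, s i * (if i = 0 then m 0 else k * m i)) →
      ∃ w : Fin (n + 1) → ℕ, 0 < w 0 ∧
        (w 0 * m 0 + ∑ i : Fin n, w i.succ * (k * m i.succ)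
          = ∑ i : Fin n, u i * (k * m i.succ)) ∧
        (∑ i : Fin n, u i ≤ ∑ i, w i) := by
  intro u hu
  obtain ⟨s, hs⟩ := hu
  have hkpos : 0 < k := hk
  set A := ∑ i : Fin n, u i * m i.succ with hA
  set B := ∑ i : Fin n, s i.succ * m i.succ with hB
  have hL : ∑ i : Fin n, u i * (k * m i.succ) = k * A := by
    rw [hA, Finset.mul_sum]
    exact Finset.sum_congr rfl fun i _ => by ring
  have hR : ∑ i : Fin (n + 1), s i * (if i = 0 then m 0 else k * m i)
      = s 0 * m 0 + k * B := by
    rw [Fin.sum_univ_succ, if_pos rfl, hB, Finset.mul_sum]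
    congr 1
    exact Finset.sum_congr rfl fun i _ => by
      rw [if_neg (Fin.succ_ne_zero i)]; ring
  rw [hL, hR] at hs
  have hkey : k * A = (1 + s 0) * m 0 + k * B := by linarith
  have hdvd : k ∣ (1 + s 0) * m 0 := by
    have h1 : k ∣ (1 + s 0) * m 0 + k * B := ⟨A, hkey.symm⟩
    have := Nat.dvd_sub h1 (Dvd.intro B rfl)
    simpa using this
  have hdvd2 : k ∣ 1 + s 0 := (Nat.Coprime.dvd_of_dvd_mul_right hkm hdvd)
  obtain ⟨t, ht⟩ := hdvd2
  have htpos : 0 < t := Nat.pos_of_ne_zero (by rintro rfl; simp at ht)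
  obtain ⟨t', rfl⟩ : ∃ t', t = t' + 1 := ⟨t - 1, by omega⟩
  have hAeq : A = (t' + 1) * m 0 + B := by
    have : k * A = k * ((t' + 1) * m 0 + B) := by
      rw [hkey, ht]; ring
    exact Nat.eq_of_mul_eq_mul_left hkpos this
  have hcond : ∃ s' : Fin (n + 1) → ℕ, A = m 0 + ∑ i, s' i * m i := by
    refine ⟨Fin.cons t' (fun i => s i.succ), ?_⟩
    rw [Fin.sum_univ_succ, Fin.cons_zero]
    have hrest : ∑ i : Fin n, (Fin.cons t' (fun j => s j.succ) : Fin (n+1) → ℕ) i.succ * m i.succ = B := by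
      rw [hB]
      exact Finset.sum_congr rfl fun i _ => by rw [Fin.cons_succ]
    rw [hrest, hAeq]; ring
  obtain ⟨v, hv0, hveq, hvsum⟩ := hcrit u hcond
  refine ⟨Fin.cons (k * v 0) (fun i => v i.succ), ?_, ?_, ?_⟩
  · simp only [Fin.cons_zero]; positivity
  · have hsplit : ∑ i, v i * m i = v 0 * m 0 + ∑ i : Fin n, v i.succ * m i.succ :=
      Fin.sum_univ_succ _
    have hC : ∑ i : Fin n, v i.succ * (k * m i.succ)
        = k * ∑ i : Fin n, v i.succ * m i.succ := by
      rw [Finset.mul_sum]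
      exact Finset.sum_congr rfl fun i _ => by ring
    simp only [Fin.cons_zero, Fin.cons_succ, hC, hL]
    rw [hsplit] at hveq
    calc k * v 0 * m 0 + k * ∑ i : Fin n, v i.succ * m i.succ
        = k * (v 0 * m 0 + ∑ i : Fin n, v i.succ * m i.succ) := by ring
      _ = k * A := by rw [hveq]
  · have hsum : ∑ i, (Fin.cons (k * v 0) (fun i => v i.succ) : Fin (n+1) → ℕ) i
        = k * v 0 + ∑ i : Fin n, v i.succ := by
      rw [Fin.sum_univ_succ, Fin.cons_zero]
      congr 1
    have hvsplit : ∑ i, v i = v 0 + ∑ i : Fin n, v i.succ := Fin.sum_univ_succ _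
    have hle : v 0 ≤ k * v 0 := Nat.le_mul_of_pos_left _ hkpos
    omega
end

section
/- Let S be the numerical semigroup generated minimally by m₁ < m₂ < ⋯ < mₙ. There exists a positive integer k₀ such that for all k ≥ k₀ with gcd(k,m₁)=1, the k-lifting S_k satisfies Herzog's criterion: for every (u₂,...,uₙ) ∈ ℕ^{n-1} with u₂(km₂)+⋯+uₙ(kmₙ) ∈ m₁+S_k, there exists (w₁,v₂,...,vₙ) ∈ ℕⁿ with w₁ > 0, w₁m₁+v₂(km₂)+⋯+vₙ(kmₙ) = u₂(km₂)+⋯+uₙ(kmₙ), and u₂+⋯+uₙ ≤ w₁+v₂+⋯+vₙ. -/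
/-- for any numerical semigroup S generated minimally by
m₁ < m₂ < ⋯ < mₙ there is k₀ such that for all k ≥ k₀ with gcd(k,m₁)=1 the
k-lifting S_k satisfies Herzog's criterion (hence has Cohen-Macaulay tangent
cone). -/
theorem herzog_criterion_eventually (n : ℕ) (m : Fin (n + 1) → ℕ)
    (hm : ∀ i, 0 < m i) (hmono : StrictMono m) :
    ∃ k₀ : ℕ, 0 < k₀ ∧ ∀ k, k₀ ≤ k → Nat.gcd k (m 0) = 1 →
      ∀ u : Fin n → ℕ,
        (∃ s : Fin (n + 1) → ℕ,
            ∑ i : Fin n, u i * (k * m i.succ)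
              = m 0 + ∑ i, s i * (if i = 0 then m 0 else k * m i)) →
        ∃ w : Fin (n + 1) → ℕ, 0 < w 0 ∧
          (w 0 * m 0 + ∑ i : Fin n, w i.succ * (k * m i.succ)
            = ∑ i : Fin n, u i * (k * m i.succ)) ∧
          (∑ i : Fin n, u i ≤ ∑ i, w i) := by
  classical
  set C : ℕ := ∑ i : Fin n, m 0 * m i.succ with hC
  refine ⟨m 0 + C + 1, by positivity, ?_⟩
  intro k hk hgcd u hu
  obtain ⟨s, hs⟩ := hu
  have hk0 : 0 < k := by omega
  set A : ℕ := ∑ i : Fin n, u i * m i.succ with hA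
  have hkA : ∑ i : Fin n, u i * (k * m i.succ) = k * A := by
    rw [hA, Finset.mul_sum]
    exact Finset.sum_congr rfl fun i _ => by ring
  set B : ℕ := ∑ i : Fin n, s i.succ * m i.succ with hB
  have hs' : k * A = (1 + s 0) * m 0 + k * B := by
    rw [← hkA, hs, Fin.sum_univ_succ]
    simp only [Fin.succ_ne_zero, if_false, if_true, reduceIte]
    rw [hB, Finset.mul_sum,
      Finset.sum_congr rfl fun (i : Fin n) _ =>
        show s i.succ * (k * m i.succ) = k * (s i.succ * m i.succ) by ring]
    ring
  have hdvd : k ∣ (1 + s 0) * m 0 := by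
    have h1 : (1 + s 0) * m 0 = k * A - k * B := by omega
    rw [h1]
    exact Nat.dvd_sub ⟨A, rfl⟩ ⟨B, rfl⟩
  obtain ⟨t0, ht0⟩ := (Nat.Coprime.dvd_of_dvd_mul_right hgcd hdvd)
  have ht0pos : 0 < t0 := Nat.pos_of_ne_zero fun h => by simp [h] at ht0
  have hArep : A = t0 * m 0 + B := by
    have h2 : k * A = k * (t0 * m 0 + B) := by rw [hs', ht0]; ring
    exact Nat.eq_of_mul_eq_mul_left hk0 h2
  set P : ℕ → Prop := fun t => ∃ c : Fin n → ℕ,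
    A = t * m 0 + ∑ i : Fin n, c i * m i.succ with hP
  have hPbound : ∀ t, P t → t ≤ A := by
    rintro t ⟨c, hc⟩
    exact le_trans (Nat.le_mul_of_pos_right t (hm 0)) (hc ▸ Nat.le_add_right _ _)
  have hPt0 : P t0 := ⟨fun i => s i.succ, hArep⟩
  set t : ℕ := Nat.findGreatest P A with ht
  have htt0 : t0 ≤ t := Nat.le_findGreatest (hPbound t0 hPt0) hPt0
  have htpos : 0 < t := lt_of_lt_of_le ht0pos htt0
  obtain ⟨c, hc⟩ : P t := Nat.findGreatest_spec (hPbound t0 hPt0) hPt0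
  -- all coefficients are at most m 0
  have hclt : ∀ j : Fin n, c j ≤ m 0 := by
    intro j
    by_contra h
    push_neg at h
    obtain ⟨d, hd⟩ : ∃ d, c j = m 0 + d := ⟨c j - m 0, by omega⟩
    have hswap : P (t + m j.succ) := by
      refine ⟨Function.update c j d, ?_⟩
      have e1 : ∑ i : Fin n, c i * m i.succ
          = c j * m j.succ + ∑ i ∈ Finset.univ.erase j, c i * m i.succ :=
        (Finset.add_sum_erase _ (fun i => c i * m i.succ) (Finset.mem_univ j)).symm
      have e2 : ∑ i : Fin n, Function.update c j d i * m i.succ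
          = d * m j.succ + ∑ i ∈ Finset.univ.erase j, c i * m i.succ := by
        rw [← Finset.add_sum_erase _ (fun i => Function.update c j d i * m i.succ)
          (Finset.mem_univ j), Function.update_self]
        congr 1
        exact Finset.sum_congr rfl fun i hi => by
          rw [Function.update_of_ne (Finset.ne_of_mem_erase hi)]
      rw [e2, hc, e1, hd]
      ring
    have hmj : 0 < m j.succ := hm j.succ
    exact Nat.findGreatest_is_greatest
      (show Nat.findGreatest P A < t + m j.succ by omega)
      (hPbound _ hswap) hswap
  have hsumC : ∑ i : Fin n, c i * m i.succ ≤ C :=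
    Finset.sum_le_sum fun i _ => Nat.mul_le_mul_right _ (hclt i)
  have hAle : A ≤ t * m 0 + C := hc ▸ add_le_add_right hsumC _
  have hAkt : A ≤ k * t :=
    calc A ≤ t * m 0 + C := hAle
      _ ≤ t * m 0 + C * t := add_le_add_right (Nat.le_mul_of_pos_right C htpos) _
      _ = t * (m 0 + C) := by ring
      _ ≤ t * k := Nat.mul_le_mul_left t (by omega)
      _ = k * t := mul_comm _ _
  refine ⟨Fin.cases (k * t) c, ?_, ?_, ?_⟩
  · simpa using Nat.mul_pos hk0 htpos
  · simp only [Fin.cases_zero, Fin.cases_succ]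
    rw [hkA, hc, mul_add, Finset.mul_sum, mul_assoc]
    congr 1
    exact Finset.sum_congr rfl fun i _ => by ring
  · rw [Fin.sum_univ_succ]
    simp only [Fin.cases_zero, Fin.cases_succ]
    have h3 : ∑ i : Fin n, u i ≤ A :=
      Finset.sum_le_sum fun i _ => Nat.le_mul_of_pos_right _ (hm _)
    exact le_trans h3 (le_trans hAkt (Nat.le_add_right _ _))
end

section
/- Let S be the numerical semigroup generated by m₁,...,mₙ with gcd(k,m₁)=1, and let S_k be its k-lifting. Then for b, b' ∈ ℕ, kb − kb' ∈ S_k (as an integer difference lying in S_k) if and only if b − b' ∈ S. In particular, for subsets B, B' ⊆ S, the condition 'd − d' ∉ S for all d, d' ∈ B' is equivalent to 'kd − kd' ∉ S_k for all d, d' ∈ B'. -/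
/-- (kb − kb' : ℤ) ∈ S_k ↔ (b − b' : ℤ) ∈ S; in particular, for a
subset B of ℕ, differences of elements of B avoid S iff the corresponding
k-scaled differences avoid S_k. -/
theorem lifting_difference_membership (n : ℕ) (m : Fin (n + 1) → ℕ)
    (hm : ∀ i, 0 < m i) (hcop : Finset.univ.gcd m = 1)
    (k : ℕ) (hk : 0 < k) (hkm : Nat.gcd k (m 0) = 1) :
    let SZ : Set ℤ := {z | ∃ v : Fin (n + 1) → ℕ, z = ∑ i, (v i : ℤ) * m i}
    let SkZ : Set ℤ := {z | ∃ w : Fin (n + 1) → ℕ,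
      z = ∑ i, (w i : ℤ) * (if i = 0 then (m 0 : ℤ) else k * m i)}
    (∀ b b' : ℕ, ((k * b : ℤ) - k * b' ∈ SkZ ↔ (b : ℤ) - b' ∈ SZ)) ∧
    (∀ B : Set ℕ, (∀ d ∈ B, ∀ d' ∈ B, (d : ℤ) - d' ∉ SZ) ↔
      (∀ d ∈ B, ∀ d' ∈ B, (k * d : ℤ) - k * d' ∉ SkZ)) := by
  intro SZ SkZ
  have hkz : (k : ℤ) ≠ 0 := by exact_mod_cast hk.ne'
  have key : ∀ z : ℤ, ((k : ℤ) * z ∈ SkZ ↔ z ∈ SZ) := by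
    intro z
    constructor
    · rintro ⟨w, hw⟩
      rw [Fin.sum_univ_succ, if_pos rfl] at hw
      have hw' : (k : ℤ) * z = (w 0 : ℤ) * m 0 +
          (k : ℤ) * ∑ i : Fin n, (w i.succ : ℤ) * m i.succ := by
        rw [hw, Finset.mul_sum]
        congr 1
        refine Finset.sum_congr rfl fun i _ => ?_
        rw [if_neg (Fin.succ_ne_zero i)]
        ring
      have hdvd : (k : ℤ) ∣ (w 0 : ℤ) * m 0 :=
        ⟨z - ∑ i : Fin n, (w i.succ : ℤ) * m i.succ, by linarith [hw']⟩
      have hdvdn : k ∣ w 0 * m 0 := by exact_mod_cast hdvd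
      have hk0 : k ∣ w 0 := (Nat.Coprime.dvd_of_dvd_mul_right hkm hdvdn)
      obtain ⟨c, hc⟩ := hk0
      refine ⟨fun i => if i = 0 then c else w i, ?_⟩
      have hz : (k : ℤ) * z =
          (k : ℤ) * ∑ i, ((if i = 0 then c else w i : ℕ) : ℤ) * m i := by
        rw [hw', Fin.sum_univ_succ, if_pos rfl, Finset.mul_sum, mul_add,
          Finset.mul_sum]
        have : ((w 0 : ℕ) : ℤ) = (k : ℤ) * c := by exact_mod_cast hc
        rw [this]
        rw [show ((k:ℤ)*c*(m 0) = ((if (0:Fin (n+1)) = 0 then c else w 0 : ℕ):ℤ) * (m 0) * k) from by rw [if_pos rfl]; ring]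
        rw [if_pos rfl]
        congr 1
        ring
      exact mul_left_cancel₀ hkz hz
    · rintro ⟨v, hv⟩
      refine ⟨fun i => if i = 0 then k * v 0 else v i, ?_⟩
      rw [hv, Fin.sum_univ_succ, Fin.sum_univ_succ]
      simp only [if_pos rfl, mul_add, Finset.mul_sum]
      congr 1
      · push_cast; ring
      refine Finset.sum_congr rfl fun i _ => ?_
      rw [if_neg (Fin.succ_ne_zero i), if_neg (Fin.succ_ne_zero i)]
      ring
  have key' : ∀ b b' : ℕ, ((k * b : ℤ) - k * b' ∈ SkZ ↔ (b : ℤ) - b' ∈ SZ) := by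
    intro b b'
    have := key ((b : ℤ) - b')
    rwa [mul_sub] at this
  refine ⟨key', fun B => ?_⟩
  constructor <;> intro h d hd d' hd'
  · rw [key']; exact h d hd d' hd'
  · intro hmem
    exact h d hd d' hd' ((key' d d').mpr hmem)
end

section
/- Let S be generated by m₁,...,mₙ and S_k its k-lifting (gcd(k,m₁)=1). If B = M − N is a binomial in I_S whose monomials M, N have no common variable factor, and x₁ divides neither M nor N, then B ∈ I_{S_k} as well. -/
open MvPolynomial

lemma aeval_mono_pow {K : Type*} [Field K] {n : ℕ} (w : Fin (n + 1) → ℕ)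
    (u : Fin (n + 1) →₀ ℕ) :
    aeval (fun i => (Polynomial.X : Polynomial K) ^ w i)
      (monomial u 1 : MvPolynomial (Fin (n + 1)) K)
      = Polynomial.X ^ (∑ i, w i * u i) := by
  rw [aeval_monomial, map_one, one_mul]
  rw [Finsupp.prod_fintype _ _ (fun i => pow_zero _)]
  simp_rw [← pow_mul]
  rw [Finset.prod_pow_eq_pow_sum]

/-- a binomial B = M − N ∈ I_S whose monomials share no variable
and involve neither of them the variable x₁ also lies in I_{S_k}. -/
theorem binomial_without_x1_lifts (K : Type*) [Field K] (n : ℕ)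
    (m : Fin (n + 1) → ℕ) (hm : ∀ i, 0 < m i)
    (k : ℕ) (hk : 0 < k) (hkm : Nat.gcd k (m 0) = 1)
    (u v : Fin (n + 1) →₀ ℕ) (hcop : ∀ i, u i = 0 ∨ v i = 0)
    (hu0 : u 0 = 0) (hv0 : v 0 = 0)
    (hker : aeval (fun i => (Polynomial.X : Polynomial K) ^ m i)
      ((monomial u 1 : MvPolynomial (Fin (n + 1)) K) - monomial v 1) = 0) :
    aeval (fun i => (Polynomial.X : Polynomial K) ^ (if i = 0 then m 0 else k * m i))
      ((monomial u 1 : MvPolynomial (Fin (n + 1)) K) - monomial v 1) = 0 := by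
  rw [map_sub, aeval_mono_pow, aeval_mono_pow, sub_eq_zero]
  rw [map_sub, aeval_mono_pow, aeval_mono_pow, sub_eq_zero] at hker
  have hAB : (∑ i, m i * u i) = ∑ i, m i * v i := by
    have := congrArg Polynomial.natDegree hker
    simpa using this
  have hu : (∑ i, (if i = 0 then m 0 else k * m i) * u i) = k * ∑ i, m i * u i := by
    rw [Finset.mul_sum]
    refine Finset.sum_congr rfl fun i _ => ?_
    by_cases h : i = 0
    · subst h; simp [hu0]
    · simp [h, mul_assoc]
  have hv : (∑ i, (if i = 0 then m 0 else k * m i) * v i) = k * ∑ i, m i * v i := by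
    rw [Finset.mul_sum]
    refine Finset.sum_congr rfl fun i _ => ?_
    by_cases h : i = 0
    · subst h; simp [hv0]
    · simp [h, mul_assoc]
  rw [hu, hv, hAB]
end

section
/- Let S be generated by m₁,...,mₙ, and suppose a binomial B = M − N ∈ I_S (with gcd(M,N) = 1 as monomials) is such that its lift B_k = M − N_k is expressible as a combination of binomials in I_{S_k} of S_k-degree strictly smaller (in the partial order s₁ <_{S_k} s₂ iff s₂ − s₁ ∈ S_k) than deg_{S_k}(B_k). Then B is expressible as a combination of binomials in I_S of S-degree strictly smaller than deg_S(B), and conversely. -/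
open MvPolynomial

namespace LiftingAux

variable {K : Type*} [Field K] {n : ℕ}

/-- The lifting linear map: `x^a ↦ x^(a with a₀ ↦ k·a₀)`. -/
noncomputable def Lup (k : ℕ) : MvPolynomial (Fin (n+1)) K →ₗ[K] MvPolynomial (Fin (n+1)) K :=
  Finsupp.lsum K (fun a : Fin (n+1) →₀ ℕ => monomial (a.update 0 (k * a 0))) ∘ₗ
    (AddMonoidAlgebra.coeffLinearEquiv K).toLinearMap

/-- The descending linear map: `x^a ↦ x^(a with a₀ ↦ a₀/k)` if `k ∣ a₀`, else `0`. -/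
noncomputable def Ldn (k : ℕ) : MvPolynomial (Fin (n+1)) K →ₗ[K] MvPolynomial (Fin (n+1)) K :=
  Finsupp.lsum K (fun a : Fin (n+1) →₀ ℕ =>
    if k ∣ a 0 then monomial (a.update 0 (a 0 / k)) else 0) ∘ₗ
    (AddMonoidAlgebra.coeffLinearEquiv K).toLinearMap

lemma Lup_monomial (k : ℕ) (a : Fin (n+1) →₀ ℕ) (r : K) :
    Lup k (monomial a r) = monomial (a.update 0 (k * a 0)) r := by
  rw [Lup, ← single_eq_monomial, LinearMap.comp_apply, LinearEquiv.coe_coe,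
    AddMonoidAlgebra.coeffLinearEquiv_apply, AddMonoidAlgebra.coeff_single]
  erw [Finsupp.lsum_single]

lemma Ldn_monomial (k : ℕ) (a : Fin (n+1) →₀ ℕ) (r : K) :
    Ldn k (monomial a r) =
      if k ∣ a 0 then monomial (a.update 0 (a 0 / k)) r else 0 := by
  rw [Ldn, ← single_eq_monomial, LinearMap.comp_apply, LinearEquiv.coe_coe,
    AddMonoidAlgebra.coeffLinearEquiv_apply, AddMonoidAlgebra.coeff_single]
  erw [Finsupp.lsum_single]
  split <;> simp

lemma update_add_update (k : ℕ) (a c : Fin (n+1) →₀ ℕ) :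
    (a + c).update 0 (k * (a + c) 0) = a.update 0 (k * a 0) + c.update 0 (k * c 0) := by
  ext i
  rcases eq_or_ne i 0 with rfl | hi
  · simp [Finsupp.coe_update, Nat.mul_add]
  · simp [Finsupp.coe_update, Function.update_of_ne hi]

lemma Lup_mul_monomial (k : ℕ) (p : MvPolynomial (Fin (n+1)) K) (c : Fin (n+1) →₀ ℕ) :
    Lup k (p * monomial c 1) = Lup k p * monomial (c.update 0 (k * c 0)) 1 := by
  induction p using MvPolynomial.induction_on' with
  | monomial a r =>
    rw [monomial_mul, Lup_monomial, Lup_monomial, monomial_mul, mul_one,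
      update_add_update]
  | add p q hp hq =>
    rw [add_mul, map_add, map_add, add_mul, hp, hq]

lemma update_add_update_dvd {k : ℕ} (hk : 0 < k) {a c : Fin (n+1) →₀ ℕ}
    (ha : k ∣ a 0) (hc : k ∣ c 0) :
    (a + c).update 0 ((a + c) 0 / k) = a.update 0 (a 0 / k) + c.update 0 (c 0 / k) := by
  obtain ⟨x, hx⟩ := ha
  obtain ⟨y, hy⟩ := hc
  ext i
  rcases eq_or_ne i 0 with rfl | hi
  · simp only [Finsupp.coe_update, Finsupp.coe_add, Pi.add_apply, Function.update_self]
    rw [hx, hy, ← Nat.mul_add, Nat.mul_div_cancel_left _ hk, Nat.mul_div_cancel_left _ hk,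
      Nat.mul_div_cancel_left _ hk]
  · simp [Finsupp.coe_update, Function.update_of_ne hi]

lemma Ldn_mul_monomial {k : ℕ} (hk : 0 < k) (p : MvPolynomial (Fin (n+1)) K)
    {c : Fin (n+1) →₀ ℕ} (hc : k ∣ c 0) :
    Ldn k (p * monomial c 1) = Ldn k p * monomial (c.update 0 (c 0 / k)) 1 := by
  induction p using MvPolynomial.induction_on' with
  | monomial a r =>
    rw [monomial_mul, Ldn_monomial, Ldn_monomial, mul_one]
    have hadd : (a + c) 0 = a 0 + c 0 := rfl
    by_cases ha : k ∣ a 0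
    · rw [if_pos (by rw [hadd]; exact Nat.dvd_add ha hc), if_pos ha, monomial_mul, mul_one,
        update_add_update_dvd hk ha hc]
    · rw [if_neg (by rw [hadd]; exact fun h => ha ((Nat.dvd_add_right hc).mp (by rwa [add_comm] at h))),
        if_neg ha, zero_mul]
  | add p q hp hq =>
    rw [add_mul, map_add, map_add, add_mul, hp, hq]

lemma span_trick (L : MvPolynomial (Fin (n+1)) K →ₗ[K] MvPolynomial (Fin (n+1)) K)
    (T S' : Set (MvPolynomial (Fin (n+1)) K))
    (hgen : ∀ q ∈ T, ∀ r, L (r * q) ∈ Ideal.span S') :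
    ∀ x ∈ Ideal.span T, ∀ r, L (r * x) ∈ Ideal.span S' := by
  intro x hx
  refine Submodule.span_induction (p := fun x _ => ∀ r, L (r * x) ∈ Ideal.span S')
    ?_ ?_ ?_ ?_ hx
  · exact hgen
  · intro r; rw [mul_zero, map_zero]; exact Ideal.zero_mem _
  · intro x y _ _ hx hy r
    rw [mul_add, map_add]; exact Ideal.add_mem _ (hx r) (hy r)
  · intro c x _ hx r
    rw [smul_eq_mul, ← mul_assoc]; exact hx (r * c)

lemma sum_m_fun (m : Fin (n+1) → ℕ) (b : Fin (n+1) → ℕ) :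
    ∑ i, b i * m i = b 0 * m 0 + ∑ i : Fin n, b i.succ * m i.succ :=
  Fin.sum_univ_succ _

lemma sum_gk_fun (m : Fin (n+1) → ℕ) (k : ℕ) (gk : Fin (n+1) → ℕ)
    (hgk : ∀ i, gk i = if i = 0 then m 0 else k * m i) (b : Fin (n+1) → ℕ) :
    ∑ i, b i * gk i = b 0 * m 0 + k * ∑ i : Fin n, b i.succ * m i.succ := by
  rw [Fin.sum_univ_succ, hgk 0, if_pos rfl, Finset.mul_sum]
  congr 1
  refine Finset.sum_congr rfl fun i _ => ?_
  rw [hgk i.succ, if_neg (Fin.succ_ne_zero i)]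
  ring

lemma sum_m_update (m : Fin (n+1) → ℕ) (b : Fin (n+1) →₀ ℕ) (v : ℕ) :
    ∑ i, (b.update 0 v : Fin (n+1) →₀ ℕ) i * m i
      = v * m 0 + ∑ i : Fin n, b i.succ * m i.succ := by
  rw [sum_m_fun]
  simp [Finsupp.coe_update, Function.update_of_ne (Fin.succ_ne_zero _)]

lemma sum_gk_update (m : Fin (n+1) → ℕ) (k : ℕ) (gk : Fin (n+1) → ℕ)
    (hgk : ∀ i, gk i = if i = 0 then m 0 else k * m i) (b : Fin (n+1) →₀ ℕ) (v : ℕ) :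
    ∑ i, (b.update 0 v : Fin (n+1) →₀ ℕ) i * gk i
      = v * m 0 + k * ∑ i : Fin n, b i.succ * m i.succ := by
  rw [sum_gk_fun m k gk hgk]
  simp [Finsupp.coe_update, Function.update_of_ne (Fin.succ_ne_zero _)]

end LiftingAux

open LiftingAux

/-- a binomial B = M − N ∈ I_S (with gcd(M,N) = 1, x₁ ∤ M) is a
combination of binomials of I_S of strictly smaller S-degree (for the order
d' <_S d iff d − d' ∈ S, d' ≠ d) if and only if its lift B_k = M − N_k is a
combination of binomials of I_{S_k} of S_k-degree strictly smaller than
deg_{S_k}(B_k) = k·deg_S(B). -/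
theorem lifting_preserves_redundancy (K : Type*) [Field K] (n : ℕ)
    (m : Fin (n + 1) → ℕ) (hm : ∀ i, 0 < m i)
    (k : ℕ) (hk : 0 < k) (hkm : Nat.gcd k (m 0) = 1)
    (u w : Fin (n + 1) →₀ ℕ) (hcop : ∀ i, u i = 0 ∨ w i = 0) (hu0 : u 0 = 0)
    (hdeg : ∑ i, u i * m i = ∑ i, w i * m i) :
    let gk : Fin (n + 1) → ℕ := fun i => if i = 0 then m 0 else k * m i
    let smaller : (Fin (n + 1) → ℕ) → ℕ → Set (MvPolynomial (Fin (n + 1)) K) :=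
      fun g D => {p | ∃ a c : Fin (n + 1) →₀ ℕ,
        p = monomial a 1 - monomial c 1 ∧
        (∑ i, a i * g i = ∑ i, c i * g i) ∧
        (∑ i, a i * g i) ≠ D ∧
        ∃ e : Fin (n + 1) → ℕ, (∑ i, a i * g i) + ∑ i, e i * g i = D}
    let B : MvPolynomial (Fin (n + 1)) K := monomial u 1 - monomial w 1
    let Bk : MvPolynomial (Fin (n + 1)) K :=
      monomial u 1 - monomial (w.update 0 (k * w 0)) 1
    (B ∈ Ideal.span (smaller m (∑ i, u i * m i)) ↔
      Bk ∈ Ideal.span (smaller gk (k * ∑ i, u i * m i))) := by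
  intro gk smaller B Bk
  have hgk : ∀ i, gk i = if i = 0 then m 0 else k * m i := fun i => rfl
  set D := ∑ i, u i * m i with hD
  constructor
  · -- forward: apply Lup
    intro hB
    have key := span_trick (Lup k) (smaller m D) (smaller gk (k * D)) ?_ B hB 1
    · rw [one_mul] at key
      have hLB : Lup k B = Bk := by
        show Lup k (monomial u 1 - monomial w 1) = _
        rw [map_sub, Lup_monomial, Lup_monomial, hu0, Nat.mul_zero,
          show u.update 0 0 = u from Finsupp.ext fun i => by
            by_cases hi : i = 0 <;> simp [Finsupp.update_apply, hi, hu0]]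
      rwa [hLB] at key
    · rintro q ⟨a, c, rfl, h1, h2, e, h3⟩ r
      rw [sum_m_fun] at h1 h2 h3
      rw [sum_m_fun m c] at h1
      rw [sum_m_fun m e] at h3
      set Sa := ∑ i : Fin n, a i.succ * m i.succ with hSa
      set Sc := ∑ i : Fin n, c i.succ * m i.succ with hSc
      set Se := ∑ i : Fin n, e i.succ * m i.succ with hSe
      have hrw : Lup k (r * (monomial a 1 - monomial c 1))
          = Lup k r * (monomial (a.update 0 (k * a 0)) 1 - monomial (c.update 0 (k * c 0)) 1) := by
        rw [mul_sub, map_sub, Lup_mul_monomial, Lup_mul_monomial, mul_sub]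
      rw [hrw]
      refine Ideal.mul_mem_left _ _ (Ideal.subset_span ?_)
      refine ⟨a.update 0 (k * a 0), c.update 0 (k * c 0), rfl, ?_, ?_, ?_⟩
      · rw [sum_gk_update m k gk hgk, sum_gk_update m k gk hgk]
        calc k * a 0 * m 0 + k * Sa = k * (a 0 * m 0 + Sa) := by ring
          _ = k * (c 0 * m 0 + Sc) := by rw [h1]
          _ = k * c 0 * m 0 + k * Sc := by ring
      · rw [sum_gk_update m k gk hgk]
        intro hcon
        apply h2
        apply Nat.eq_of_mul_eq_mul_left hk
        calc k * (a 0 * m 0 + Sa) = k * a 0 * m 0 + k * Sa := by ring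
          _ = k * D := hcon
      · refine ⟨Function.update e 0 (k * e 0), ?_⟩
        rw [sum_gk_update m k gk hgk, sum_gk_fun m k gk hgk]
        have he0 : Function.update e 0 (k * e 0) 0 = k * e 0 := Function.update_self _ _ _
        have heS : ∑ i : Fin n, Function.update e 0 (k * e 0) i.succ * m i.succ = Se := by
          refine Finset.sum_congr rfl fun i _ => ?_
          rw [Function.update_of_ne (Fin.succ_ne_zero i)]
        rw [he0, heS, ← h3]
        ring
  · -- backward: apply Ldn
    intro hBk
    have key := span_trick (Ldn k) (smaller gk (k * D)) (smaller m D) ?_ Bk hBk 1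
    · rw [one_mul] at key
      have hLBk : Ldn k Bk = B := by
        show Ldn k (monomial u 1 - monomial (w.update 0 (k * w 0)) 1) = _
        rw [map_sub, Ldn_monomial, Ldn_monomial, hu0]
        rw [if_pos (Nat.dvd_zero k)]
        have hw0 : (w.update 0 (k * w 0) : Fin (n+1) →₀ ℕ) 0 = k * w 0 := by
          simp [Finsupp.coe_update]
        rw [if_pos (by rw [hw0]; exact Dvd.intro _ rfl)]
        have h1 : u.update 0 (0 / k) = u := by
          rw [Nat.zero_div]
          exact Finsupp.ext fun i => by
            by_cases hi : i = 0 <;> simp [Finsupp.update_apply, hi, hu0]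
        have h2 : (w.update 0 (k * w 0)).update 0 ((w.update 0 (k * w 0) : Fin (n+1) →₀ ℕ) 0 / k)
            = w := by
          rw [hw0, Nat.mul_div_cancel_left _ hk]
          ext i
          rcases eq_or_ne i 0 with rfl | hi
          · simp [Finsupp.coe_update]
          · simp [Finsupp.coe_update, Function.update_of_ne hi]
        rw [h1, h2]
      rwa [hLBk] at key
    · rintro q ⟨a, c, rfl, h1, h2, e, h3⟩ r
      rw [sum_gk_fun m k gk hgk] at h1 h2 h3
      rw [sum_gk_fun m k gk hgk c] at h1
      rw [sum_gk_fun m k gk hgk e] at h3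
      set Sa := ∑ i : Fin n, a i.succ * m i.succ with hSa
      set Sc := ∑ i : Fin n, c i.succ * m i.succ with hSc
      set Se := ∑ i : Fin n, e i.succ * m i.succ with hSe
      set s := a 0 % k with hs
      -- the residues of a 0 and c 0 mod k agree
      have hmods : c 0 % k = s := by
        have hmeq : a 0 * m 0 ≡ c 0 * m 0 [MOD k] := by
          show (a 0 * m 0) % k = (c 0 * m 0) % k
          have ha' : (a 0 * m 0 + k * Sa) % k = (a 0 * m 0) % k :=
            Nat.add_mul_mod_self_left _ _ _
          have hc' : (c 0 * m 0 + k * Sc) % k = (c 0 * m 0) % k :=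
            Nat.add_mul_mod_self_left _ _ _
          rw [← ha', ← hc', h1]
        exact (Nat.ModEq.cancel_right_of_coprime hkm hmeq).symm
      obtain ⟨qa, hka⟩ : ∃ q, k * q + s = a 0 := ⟨a 0 / k, Nat.div_add_mod (a 0) k⟩
      obtain ⟨qc, hkc⟩ : ∃ q, k * q + s = c 0 :=
        ⟨c 0 / k, by rw [← hmods]; exact Nat.div_add_mod (c 0) k⟩
      have hA : a 0 * m 0 + k * Sa = k * (qa * m 0 + Sa) + s * m 0 := by
        rw [← hka]; ring
      have hC : c 0 * m 0 + k * Sc = k * (qc * m 0 + Sc) + s * m 0 := by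
        rw [← hkc]; ring
      have hXY : qa * m 0 + Sa = qc * m 0 + Sc := by
        apply Nat.eq_of_mul_eq_mul_left hk
        have h1' := h1
        rw [hA, hC] at h1'
        exact Nat.add_right_cancel h1'
      -- the descended binomial is in `smaller m D`
      have hmem : (monomial (a.update 0 qa) 1 - monomial (c.update 0 qc) 1 :
          MvPolynomial (Fin (n+1)) K) ∈ smaller m D := by
        refine ⟨a.update 0 qa, c.update 0 qc, rfl, ?_, ?_, ?_⟩
        · rw [sum_m_update, sum_m_update]
          exact hXY
        · rw [sum_m_update]
          intro hcon
          have hcon' : qa * m 0 + Sa = D := hcon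
          rw [hA, hcon'] at h2 h3
          have hsm : s * m 0 = 0 := by omega
          have hs0 : s = 0 := by
            rcases Nat.mul_eq_zero.mp hsm with h | h
            · exact h
            · exact absurd h (hm 0).ne'
          apply h2
          rw [hs0, Nat.zero_mul, Nat.add_zero]
        · rw [hA] at h3
          have h5 : k * (qa * m 0 + Sa) + (s + e 0) * m 0 + k * Se = k * D := by
            rw [add_mul, ← h3]; ring
          have h6 : (s + e 0) * m 0 + k * ((qa * m 0 + Sa) + Se) = k * D := by
            rw [← h5]; ring
          have h7 : k ∣ (s + e 0) * m 0 := by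
            have hd : k ∣ (s + e 0) * m 0 + k * ((qa * m 0 + Sa) + Se) :=
              h6 ▸ dvd_mul_right k D
            rw [add_comm] at hd
            exact (Nat.dvd_add_right (dvd_mul_right k _)).mp hd
          obtain ⟨t, ht⟩ : ∃ t, s + e 0 = k * t :=
            Nat.Coprime.dvd_of_dvd_mul_right hkm h7
          refine ⟨Function.update e 0 t, ?_⟩
          rw [sum_m_update, sum_m_fun]
          have he0 : Function.update e 0 t 0 = t := Function.update_self _ _ _
          have heS : ∑ i : Fin n, Function.update e 0 t i.succ * m i.succ = Se := by
            refine Finset.sum_congr rfl fun i _ => ?_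
            rw [Function.update_of_ne (Fin.succ_ne_zero i)]
          rw [he0, heS]
          apply Nat.eq_of_mul_eq_mul_left hk
          calc k * (qa * m 0 + Sa + (t * m 0 + Se))
              = k * (qa * m 0 + Sa) + (k * t) * m 0 + k * Se := by ring
            _ = k * (qa * m 0 + Sa) + (s + e 0) * m 0 + k * Se := by rw [← ht]
            _ = k * D := h5
      -- the L identity
      have hsub_a : a 0 - s = k * qa := Nat.sub_eq_of_eq_add (by omega)
      have hsub_c : c 0 - s = k * qc := Nat.sub_eq_of_eq_add (by omega)
      have hle_a : s ≤ a 0 := by omega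
      have hle_c : s ≤ c 0 := by omega
      have hsa : Finsupp.single (0 : Fin (n+1)) s + a.update 0 (a 0 - s) = a := by
        ext i
        rcases eq_or_ne i 0 with rfl | hi
        · simp only [Finsupp.add_apply, Finsupp.single_eq_same, Finsupp.coe_update,
            Function.update_self]
          omega
        · simp [Finsupp.single_apply, Ne.symm hi, Finsupp.coe_update,
            Function.update_of_ne hi]
      have hsc : Finsupp.single (0 : Fin (n+1)) s + c.update 0 (c 0 - s) = c := by
        ext i
        rcases eq_or_ne i 0 with rfl | hi
        · simp only [Finsupp.add_apply, Finsupp.single_eq_same, Finsupp.coe_update,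
            Function.update_self]
          omega
        · simp [Finsupp.single_apply, Ne.symm hi, Finsupp.coe_update,
            Function.update_of_ne hi]
      have hval_a : (a.update 0 (a 0 - s) : Fin (n+1) →₀ ℕ) 0 = a 0 - s := by
        simp [Finsupp.coe_update]
      have hval_c : (c.update 0 (c 0 - s) : Fin (n+1) →₀ ℕ) 0 = c 0 - s := by
        simp [Finsupp.coe_update]
      have hda : k ∣ (a.update 0 (a 0 - s) : Fin (n+1) →₀ ℕ) 0 := by
        rw [hval_a, hsub_a]; exact Dvd.intro _ rfl
      have hdc : k ∣ (c.update 0 (c 0 - s) : Fin (n+1) →₀ ℕ) 0 := by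
        rw [hval_c, hsub_c]; exact Dvd.intro _ rfl
      have hupd_a : (a.update 0 (a 0 - s)).update 0
          ((a.update 0 (a 0 - s) : Fin (n+1) →₀ ℕ) 0 / k) = a.update 0 qa := by
        rw [hval_a, hsub_a, Nat.mul_div_cancel_left _ hk]
        ext i
        rcases eq_or_ne i 0 with rfl | hi
        · simp [Finsupp.coe_update]
        · simp [Finsupp.coe_update, Function.update_of_ne hi]
      have hupd_c : (c.update 0 (c 0 - s)).update 0
          ((c.update 0 (c 0 - s) : Fin (n+1) →₀ ℕ) 0 / k) = c.update 0 qc := by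
        rw [hval_c, hsub_c, Nat.mul_div_cancel_left _ hk]
        ext i
        rcases eq_or_ne i 0 with rfl | hi
        · simp [Finsupp.coe_update]
        · simp [Finsupp.coe_update, Function.update_of_ne hi]
      have hma : (monomial a 1 : MvPolynomial (Fin (n+1)) K)
          = monomial (Finsupp.single 0 s) 1 * monomial (a.update 0 (a 0 - s)) 1 := by
        rw [monomial_mul, mul_one, hsa]
      have hmc : (monomial c 1 : MvPolynomial (Fin (n+1)) K)
          = monomial (Finsupp.single 0 s) 1 * monomial (c.update 0 (c 0 - s)) 1 := by
        rw [monomial_mul, mul_one, hsc]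
      have hrw : Ldn k (r * (monomial a 1 - monomial c 1))
          = Ldn k (r * monomial (Finsupp.single 0 s) 1) *
            (monomial (a.update 0 qa) 1 - monomial (c.update 0 qc) 1) := by
        rw [mul_sub, map_sub, hma, hmc, ← mul_assoc, ← mul_assoc,
          Ldn_mul_monomial hk _ hda, Ldn_mul_monomial hk _ hdc, hupd_a, hupd_c, mul_sub]
      rw [hrw]
      exact Ideal.mul_mem_left _ _ (Ideal.subset_span hmem)
end

section
/- Let S be a numerical semigroup generated by m₁,...,mₙ with gcd(k,m₁)=1, and S_k its k-lifting. For b ∈ S, the number of factorizations of b in S equals the number of factorizations of kb in S_k: |{(v₁,...,vₙ) ∈ ℕⁿ : Σvᵢmᵢ = b}| = |{(w₁,v₂,...,vₙ) ∈ ℕⁿ : w₁m₁ + Σ_{i≥2} vᵢ(kmᵢ) = kb}|. -/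
/-- the number of factorizations of b in S equals the number of
factorizations of kb in the k-lifting S_k. -/
theorem lifting_factorization_count (n : ℕ) (m : Fin (n + 1) → ℕ)
    (hm : ∀ i, 0 < m i) (k : ℕ) (hk : 0 < k) (hkm : Nat.gcd k (m 0) = 1)
    (b : ℕ) (hb : ∃ v : Fin (n + 1) → ℕ, b = ∑ i, v i * m i) :
    {v : Fin (n + 1) → ℕ | ∑ i, v i * m i = b}.ncard =
      {w : Fin (n + 1) → ℕ |
        ∑ i, w i * (if i = 0 then m 0 else k * m i) = k * b}.ncard := by
  set f : (Fin (n + 1) → ℕ) → (Fin (n + 1) → ℕ) :=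
    fun v => Function.update v 0 (k * v 0) with hf
  have hinj : Function.Injective f := by
    intro v v' h
    funext i
    by_cases hi : i = 0
    · subst hi
      have := congrFun h 0
      simp only [hf, Function.update_self] at this
      exact Nat.eq_of_mul_eq_mul_left hk this
    · have := congrFun h i
      simpa [hf, Function.update_of_ne hi] using this
  have himg : f '' {v : Fin (n + 1) → ℕ | ∑ i, v i * m i = b} =
      {w : Fin (n + 1) → ℕ |
        ∑ i, w i * (if i = 0 then m 0 else k * m i) = k * b} := by
    ext w
    simp only [Set.mem_image, Set.mem_setOf_eq]
    constructor
    · rintro ⟨v, hv, rfl⟩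
      rw [Fin.sum_univ_succ]
      simp only [hf, Function.update_self]
      have : ∀ i : Fin n, Function.update v 0 (k * v 0) i.succ *
          (if i.succ = (0 : Fin (n+1)) then m 0 else k * m i.succ)
          = k * (v i.succ * m i.succ) := by
        intro i
        rw [Function.update_of_ne (Fin.succ_ne_zero i)]
        simp [Fin.succ_ne_zero i]
        ring
      rw [Finset.sum_congr rfl (fun i _ => this i), ← Finset.mul_sum]
      have hv' := hv
      rw [Fin.sum_univ_succ] at hv'
      rw [← hv']
      simp
      ring
    · intro hw
      have hsum : w 0 * m 0 + ∑ i : Fin n, w i.succ * (k * m i.succ) = k * b := by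
        rw [← hw, Fin.sum_univ_succ]
        simp [Fin.succ_ne_zero]
      have hdvd : k ∣ w 0 := by
        have h1 : k ∣ w 0 * m 0 := by
          have : k ∣ w 0 * m 0 + ∑ i : Fin n, k * (w i.succ * m i.succ) := by
            rw [show (∑ i : Fin n, k * (w i.succ * m i.succ)) =
              ∑ i : Fin n, w i.succ * (k * m i.succ) by
                apply Finset.sum_congr rfl; intro i _; ring]
            rw [hsum]; exact Dvd.intro b rfl
          have h2 : k ∣ ∑ i : Fin n, k * (w i.succ * m i.succ) :=
            Finset.dvd_sum fun i _ => Dvd.intro _ rfl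
          exact (Nat.dvd_add_right h2).mp (by rwa [Nat.add_comm] at this)
        exact (Nat.Coprime.dvd_of_dvd_mul_right hkm h1)
      obtain ⟨c, hc⟩ := hdvd
      refine ⟨Function.update w 0 c, ?_, ?_⟩
      · apply Nat.eq_of_mul_eq_mul_left hk
        rw [Fin.sum_univ_succ, Function.update_self]
        rw [Nat.mul_add, Finset.mul_sum]
        have : ∀ i : Fin n, k * (Function.update w 0 c i.succ * m i.succ)
            = w i.succ * (k * m i.succ) := by
          intro i
          rw [Function.update_of_ne (Fin.succ_ne_zero i)]
          ring
        rw [Finset.sum_congr rfl (fun i _ => this i)]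
        rw [← hsum, hc]
        ring
      · funext i
        by_cases hi : i = 0
        · subst hi
          simp [hf, Function.update_self, hc]
        · simp [hf, Function.update_of_ne hi]
  rw [← himg, Set.ncard_image_of_injective _ hinj]
end

section
/- Let S be a numerical semigroup generated by m₁,...,mₙ, and let b ∈ S have exactly two factorizations, corresponding to monomials M and N with gcd(M,N) = 1. Then for the k-lifting S_k (gcd(k,m₁)=1), the element kb ∈ S_k has exactly two factorizations, corresponding to the monomials M_k and N_k obtained by multiplying the x₁-exponent by k. -/
/-- if b ∈ S has exactly the two factorizations u ≠ w (with
gcd(M,N) = 1, i.e. no index where both are nonzero), then kb has in the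
k-lifting S_k exactly the two factorizations obtained by multiplying the first
exponent by k. -/
theorem lifting_two_factorizations (n : ℕ) (m : Fin (n + 1) → ℕ)
    (hm : ∀ i, 0 < m i) (k : ℕ) (hk : 0 < k) (hkm : Nat.gcd k (m 0) = 1)
    (b : ℕ) (u w : Fin (n + 1) → ℕ) (huw : u ≠ w)
    (hcop : ∀ i, u i = 0 ∨ w i = 0)
    (hfac : {v : Fin (n + 1) → ℕ | ∑ i, v i * m i = b} = {u, w}) :
    {v : Fin (n + 1) → ℕ |
        ∑ i, v i * (if i = 0 then m 0 else k * m i) = k * b}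
      = {Function.update u 0 (k * u 0), Function.update w 0 (k * w 0)} ∧
    Function.update u 0 (k * u 0) ≠ Function.update w 0 (k * w 0) := by
  have hmem : ∀ v : Fin (n+1) → ℕ, (∑ i, v i * m i = b) ↔ (v = u ∨ v = w) := by
    intro v
    constructor
    · intro h
      have : v ∈ ({u, w} : Set (Fin (n+1) → ℕ)) := hfac ▸ h
      simpa using this
    · rintro (rfl | rfl)
      · have : v ∈ ({v, w} : Set (Fin (n+1) → ℕ)) := by simp
        rw [← hfac] at this; exact this
      · have : v ∈ ({u, v} : Set (Fin (n+1) → ℕ)) := by simp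
        rw [← hfac] at this; exact this
  have key : ∀ v : Fin (n+1) → ℕ,
      ∑ i, v i * (if i = 0 then m 0 else k * m i)
        = v 0 * m 0 + k * ∑ i : Fin n, v i.succ * m i.succ := by
    intro v
    rw [Fin.sum_univ_succ]
    simp only [Fin.succ_ne_zero, if_neg, if_pos, Finset.mul_sum, reduceIte]
    congr 1
    refine Finset.sum_congr rfl fun i _ => ?_
    ring
  have key2 : ∀ v : Fin (n+1) → ℕ,
      ∑ i, v i * m i = v 0 * m 0 + ∑ i : Fin n, v i.succ * m i.succ := by
    intro v
    rw [Fin.sum_univ_succ]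
  have hu : u 0 * m 0 + ∑ i : Fin n, u i.succ * m i.succ = b := by
    rw [← key2]; exact (hmem u).2 (Or.inl rfl)
  have hw : w 0 * m 0 + ∑ i : Fin n, w i.succ * m i.succ = b := by
    rw [← key2]; exact (hmem w).2 (Or.inr rfl)
  constructor
  · ext v
    simp only [Set.mem_setOf_eq, Set.mem_insert_iff, Set.mem_singleton_iff, key]
    constructor
    · intro h
      have hdvd : k ∣ v 0 * m 0 := by
        have hle : k * (∑ i : Fin n, v i.succ * m i.succ) ≤ k * b := by omega
        have : v 0 * m 0 = k * b - k * (∑ i : Fin n, v i.succ * m i.succ) := by omega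
        exact this ▸ Nat.dvd_sub ⟨b, rfl⟩ ⟨_, rfl⟩
      obtain ⟨c, hc⟩ := (Nat.Coprime.dvd_of_dvd_mul_right hkm hdvd)
      have hb : c * m 0 + ∑ i : Fin n, v i.succ * m i.succ = b := by
        apply Nat.eq_of_mul_eq_mul_left hk
        rw [hc] at h
        rw [Nat.mul_add, ← Nat.mul_assoc]
        exact h
      have hv' : Function.update v 0 c = u ∨ Function.update v 0 c = w := by
        rw [← hmem, key2]
        simpa [Function.update, Fin.succ_ne_zero] using hb
      rcases hv' with hv' | hv'
      · left
        funext i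
        by_cases hi : i = 0
        · subst hi
          have : c = u 0 := by rw [← hv']; simp
          simp [Function.update_self, ← this, hc, Nat.mul_comm]
        · rw [Function.update_of_ne hi, ← hv', Function.update_of_ne hi]
      · right
        funext i
        by_cases hi : i = 0
        · subst hi
          have : c = w 0 := by rw [← hv']; simp
          simp [Function.update_self, ← this, hc, Nat.mul_comm]
        · rw [Function.update_of_ne hi, ← hv', Function.update_of_ne hi]
    · rintro (rfl | rfl)
      · simp only [Function.update_self]
        have : ∀ i : Fin n, Function.update u 0 (k * u 0) i.succ = u i.succ :=
          fun i => Function.update_of_ne (Fin.succ_ne_zero i) _ _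
        simp only [this]
        rw [← hu]; ring
      · simp only [Function.update_self]
        have : ∀ i : Fin n, Function.update w 0 (k * w 0) i.succ = w i.succ :=
          fun i => Function.update_of_ne (Fin.succ_ne_zero i) _ _
        simp only [this]
        rw [← hw]; ring
  · intro h
    apply huw
    funext i
    by_cases hi : i = 0
    · subst hi
      have := congrFun h 0
      simp only [Function.update_self] at this
      exact Nat.eq_of_mul_eq_mul_left hk this
    · have := congrFun h i
      rwa [Function.update_of_ne hi, Function.update_of_ne hi] at this
end
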